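/- Let H and G be groups and φ: G → Aut(H) an action. A map R: H → G is a relative Rota-Baxter operator (i.e., R(h₁)R(h₂) = R(h₁ · φ_{R(h₁)}(h₂)) for all h₁, h₂) if and only if the graph Gr(R) = {(R(h), h) | h ∈ H} is a subgroup of the semidirect product G ⋉_φ H. -/

import Mathlib

/-- A map `R : H → G` is a relative Rota-Baxter operator with respect
to the action `φ` if and only if the graph `Gr(R) = {(R h, h) | h ∈ H}` is a
subgroup of the semidirect product `G ⋉_φ H` (in Mathlib, `H ⋊[φ] G`). -/
theorem stmt_3 {H G : Type*} [Group H] [Group G] (φ : G →* MulAut H) (R : H → G) :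
    (∀ h₁ h₂ : H, R h₁ * R h₂ = R (h₁ * φ (R h₁) h₂)) ↔
    ∃ M : Subgroup (H ⋊[φ] G),
      (M : Set (H ⋊[φ] G)) = Set.range (fun h : H => (⟨h, R h⟩ : H ⋊[φ] G)) := by
  constructor
  · intro hR
    have hR1 : R 1 = 1 := by
      have := hR 1 1
      simp only [map_one, MulAut.one_apply, mul_one, one_mul] at this
      exact mul_eq_left.mp this
    refine ⟨{ carrier := Set.range (fun h : H => (⟨h, R h⟩ : H ⋊[φ] G))
              mul_mem' := ?_
              one_mem' := ?_
              inv_mem' := ?_ }, rfl⟩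
    · rintro a b ⟨h₁, rfl⟩ ⟨h₂, rfl⟩
      exact ⟨h₁ * φ (R h₁) h₂, by
        simp only [SemidirectProduct.ext_iff, SemidirectProduct.mul_left,
          SemidirectProduct.mul_right]
        exact ⟨trivial, (hR h₁ h₂).symm⟩⟩
    · exact ⟨1, by simp [hR1, SemidirectProduct.ext_iff]⟩
    · rintro a ⟨h, rfl⟩
      have key : R ((φ (R h))⁻¹ h⁻¹) = (R h)⁻¹ := by
        have := hR h ((φ (R h))⁻¹ h⁻¹)
        simp only [MulAut.apply_inv_self] at this
        rw [mul_inv_cancel, hR1] at this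
        exact eq_inv_of_mul_eq_one_right this
      exact ⟨(φ (R h))⁻¹ h⁻¹, by
        simp only [SemidirectProduct.ext_iff, SemidirectProduct.inv_left,
          SemidirectProduct.inv_right, key]
        exact ⟨by simp, trivial⟩⟩
  · rintro ⟨M, hM⟩ h₁ h₂
    have mem : ∀ h : H, (⟨h, R h⟩ : H ⋊[φ] G) ∈ M := fun h => by
      rw [← SetLike.mem_coe, hM]; exact ⟨h, rfl⟩
    have := M.mul_mem (mem h₁) (mem h₂)
    rw [← SetLike.mem_coe, hM] at this
    obtain ⟨h₃, hh₃⟩ := this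
    have hl := congrArg SemidirectProduct.left hh₃
    have hr := congrArg SemidirectProduct.right hh₃
    simp only [SemidirectProduct.mul_left, SemidirectProduct.mul_right] at hl hr
    rw [← hl]; exact hr.symm
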